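/- Let S and A be nonempty finite types, let T : S → A → S → ℝ satisfy T(s,a,s') ≥ 0 and Σ_{s'} T(s,a,s') = 1 for all s, a, let R : S → A → S → ℝ be any function, let m : S → Bool designate maximizer states, and let γ ∈ [0,1). Then the minimax Bellman operator B, defined by (B Q)(s,a) = Σ_{s'} T(s,a,s') · (R(s,a,s') + γ · opt_{a' ∈ A} Q(s',a')) with opt = max if m(s') = true and min otherwise, has a unique fixed point Q* : S → A → ℝ, i.e., there exists exactly one Q* with B Q* = Q*. -/

import Mathlib

private lemma abs_sup'_sub_sup'_le {α : Type*} (s : Finset α) (hs : s.Nonempty)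
    (f g : α → ℝ) (c : ℝ) (h : ∀ x ∈ s, |f x - g x| ≤ c) :
    |s.sup' hs f - s.sup' hs g| ≤ c := by
  have key : ∀ (f g : α → ℝ), (∀ x ∈ s, |f x - g x| ≤ c) →
      s.sup' hs f - s.sup' hs g ≤ c := by
    intro f g h
    have : s.sup' hs f ≤ s.sup' hs g + c := by
      apply Finset.sup'_le
      intro x hx
      have := h x hx
      have h1 : f x ≤ g x + c := by
        have := abs_le.mp this
        linarith [this.2]
      exact h1.trans (by linarith [Finset.le_sup' g hx])
    linarith
  have h2 : ∀ x ∈ s, |g x - f x| ≤ c := by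
    intro x hx; rw [abs_sub_comm]; exact h x hx
  exact abs_le.mpr ⟨by linarith [key g f h2], key f g h⟩

private lemma abs_inf'_sub_inf'_le {α : Type*} (s : Finset α) (hs : s.Nonempty)
    (f g : α → ℝ) (c : ℝ) (h : ∀ x ∈ s, |f x - g x| ≤ c) :
    |s.inf' hs f - s.inf' hs g| ≤ c := by
  have key : ∀ (f g : α → ℝ), (∀ x ∈ s, |f x - g x| ≤ c) →
      s.inf' hs f - s.inf' hs g ≤ c := by
    intro f g h
    have : s.inf' hs f ≤ s.inf' hs g + c := by
      obtain ⟨x, hx, hxe⟩ := s.exists_mem_eq_inf' hs g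
      rw [hxe]
      have := abs_le.mp (h x hx)
      calc s.inf' hs f ≤ f x := Finset.inf'_le f hx
        _ ≤ g x + c := by linarith [this.2]
    linarith
  have h2 : ∀ x ∈ s, |g x - f x| ≤ c := by
    intro x hx; rw [abs_sub_comm]; exact h x hx
  exact abs_le.mpr ⟨by linarith [key g f h2], key f g h⟩

theorem minimax_bellman_unique_fixed_point
    {S A : Type*} [Fintype S] [Fintype A] [Nonempty S] [Nonempty A]
    (T : S → A → S → ℝ) (R : S → A → S → ℝ) (m : S → Bool) (γ : ℝ)
    (hT0 : ∀ s a s', 0 ≤ T s a s')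
    (hT1 : ∀ s a, ∑ s', T s a s' = 1)
    (hγ0 : 0 ≤ γ) (hγ1 : γ < 1)
    (B : (S → A → ℝ) → (S → A → ℝ))
    (hB : ∀ Q s a, B Q s a
      = ∑ s', T s a s' * (R s a s'
          + γ * (if m s' then Finset.univ.sup' Finset.univ_nonempty (fun a' => Q s' a')
                 else Finset.univ.inf' Finset.univ_nonempty (fun a' => Q s' a')))) :
    ∃! Qstar : S → A → ℝ, B Qstar = Qstar := by
  set K : NNReal := ⟨γ, hγ0⟩ with hK
  have hKlt : K < 1 := by
    rw [← NNReal.coe_lt_coe]; exact hγ1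
  have hlip : LipschitzWith K B := by
    apply LipschitzWith.of_dist_le_mul
    intro Q1 Q2
    have hd0 : (0:ℝ) ≤ dist Q1 Q2 := dist_nonneg
    rw [dist_pi_le_iff (by positivity)]
    intro s
    rw [dist_pi_le_iff (by positivity)]
    intro a
    rw [hB, hB, Real.dist_eq, ← Finset.sum_sub_distrib]
    have hpt : ∀ s' : S,
        |T s a s' * (R s a s' + γ * (if m s' then Finset.univ.sup' Finset.univ_nonempty (fun a' => Q1 s' a')
                 else Finset.univ.inf' Finset.univ_nonempty (fun a' => Q1 s' a')))
         - T s a s' * (R s a s' + γ * (if m s' then Finset.univ.sup' Finset.univ_nonempty (fun a' => Q2 s' a')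
                 else Finset.univ.inf' Finset.univ_nonempty (fun a' => Q2 s' a')))|
        ≤ T s a s' * (γ * dist Q1 Q2) := by
      intro s'
      rw [← mul_sub, abs_mul, abs_of_nonneg (hT0 s a s')]
      apply mul_le_mul_of_nonneg_left _ (hT0 s a s')
      have hopt : |(if m s' then Finset.univ.sup' Finset.univ_nonempty (fun a' => Q1 s' a')
                 else Finset.univ.inf' Finset.univ_nonempty (fun a' => Q1 s' a'))
          - (if m s' then Finset.univ.sup' Finset.univ_nonempty (fun a' => Q2 s' a')
                 else Finset.univ.inf' Finset.univ_nonempty (fun a' => Q2 s' a'))| ≤ dist Q1 Q2 := by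
        have hab : ∀ a' : A, |Q1 s' a' - Q2 s' a'| ≤ dist Q1 Q2 := by
          intro a'
          calc |Q1 s' a' - Q2 s' a'| = dist (Q1 s' a') (Q2 s' a') := (Real.dist_eq _ _).symm
            _ ≤ dist (Q1 s') (Q2 s') := dist_le_pi_dist (Q1 s') (Q2 s') a'
            _ ≤ dist Q1 Q2 := dist_le_pi_dist Q1 Q2 s'
        by_cases hms : m s'
        · simp only [hms, if_true]
          exact abs_sup'_sub_sup'_le _ Finset.univ_nonempty _ _ _ (fun x _ => hab x)
        · simp only [hms, if_false]
          exact abs_inf'_sub_inf'_le _ Finset.univ_nonempty _ _ _ (fun x _ => hab x)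
      have : R s a s' + γ * (if m s' then Finset.univ.sup' Finset.univ_nonempty (fun a' => Q1 s' a')
                 else Finset.univ.inf' Finset.univ_nonempty (fun a' => Q1 s' a'))
          - (R s a s' + γ * (if m s' then Finset.univ.sup' Finset.univ_nonempty (fun a' => Q2 s' a')
                 else Finset.univ.inf' Finset.univ_nonempty (fun a' => Q2 s' a')))
          = γ * ((if m s' then Finset.univ.sup' Finset.univ_nonempty (fun a' => Q1 s' a')
                 else Finset.univ.inf' Finset.univ_nonempty (fun a' => Q1 s' a'))
            - (if m s' then Finset.univ.sup' Finset.univ_nonempty (fun a' => Q2 s' a')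
                 else Finset.univ.inf' Finset.univ_nonempty (fun a' => Q2 s' a'))) := by ring
      rw [this, abs_mul, abs_of_nonneg hγ0]
      exact mul_le_mul_of_nonneg_left hopt hγ0
    calc |∑ s', (T s a s' * (R s a s' + γ * (if m s' then Finset.univ.sup' Finset.univ_nonempty (fun a' => Q1 s' a')
                 else Finset.univ.inf' Finset.univ_nonempty (fun a' => Q1 s' a')))
         - T s a s' * (R s a s' + γ * (if m s' then Finset.univ.sup' Finset.univ_nonempty (fun a' => Q2 s' a')
                 else Finset.univ.inf' Finset.univ_nonempty (fun a' => Q2 s' a'))))|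
        ≤ ∑ s', T s a s' * (γ * dist Q1 Q2) := by
          refine (Finset.abs_sum_le_sum_abs _ _).trans ?_
          exact Finset.sum_le_sum fun s' _ => hpt s'
      _ = (∑ s', T s a s') * (γ * dist Q1 Q2) := by rw [Finset.sum_mul]
      _ = K * dist Q1 Q2 := by rw [hT1 s a, one_mul]; simp [hK]; exact Or.inl rfl
  have hcontr : ContractingWith K B := ⟨hKlt, hlip⟩
  refine ⟨hcontr.fixedPoint B, hcontr.fixedPoint_isFixedPt, ?_⟩
  intro Q hQ
  exact hcontr.fixedPoint_unique hQ
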